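/- For every positive natural number L, define X(L) = Σ_j (-1)^j q^(2j²-j) [2L choose L-2j]_q. Then X(L) = (1+q^L) ∏_{k=1}^{L-1} (1+q^(2k)); in particular X(L) has nonnegative coefficients. -/

import Mathlib

open LaurentPolynomial Finset

noncomputable section

/-- Gaussian binomial coefficient with natural indices, in base `x`, defined by the
`q`-Pascal recurrence `[n+1, k+1] = [n, k] + x^(k+1) * [n, k+1]`.  It vanishes for `k > n`. -/
def gaussAux (x : LaurentPolynomial ℤ) : ℕ → ℕ → LaurentPolynomial ℤ
  | _, 0 => 1
  | 0, _ + 1 => 0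
  | n + 1, k + 1 => gaussAux x n k + x ^ (k + 1) * gaussAux x n (k + 1)

/-- The Gaussian binomial coefficient `[n choose k]` in base `x`, for integer indices:
it is zero when `n < 0` or `k < 0` (and, by `gaussAux`, also when `k > n`). -/
def qbin (x : LaurentPolynomial ℤ) (n k : ℤ) : LaurentPolynomial ℤ :=
  if 0 ≤ n ∧ 0 ≤ k then gaussAux x n.toNat k.toNat else 0

/-- `(-1)^j` for an integer `j`, as a Laurent polynomial. -/
def m1 (j : ℤ) : LaurentPolynomial ℤ := ((((-1 : ℤˣ) ^ j : ℤˣ) : ℤ) : LaurentPolynomial ℤ)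

/-! ### auxiliary lemmas -/

lemma gaussAux_zero_right (x : LaurentPolynomial ℤ) (n : ℕ) : gaussAux x n 0 = 1 := by
  cases n <;> rfl

lemma gaussAux_eq_zero (x : LaurentPolynomial ℤ) :
    ∀ {n k : ℕ}, n < k → gaussAux x n k = 0
  | 0, _ + 1, _ => rfl
  | n + 1, k + 1, h => by
    rw [gaussAux, gaussAux_eq_zero x (show n < k by omega),
      gaussAux_eq_zero x (show n < k + 1 by omega)]
    ring

lemma qbin_eq_zero_of_neg (x : LaurentPolynomial ℤ) (n k : ℤ) (h : k < 0) :
    qbin x n k = 0 := by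
  rw [qbin, if_neg]; omega

lemma qbin_eq_zero_of_lt (x : LaurentPolynomial ℤ) (n k : ℤ) (h : n < k) :
    qbin x n k = 0 := by
  rw [qbin]
  split_ifs with hc
  · exact gaussAux_eq_zero x (by omega)
  · rfl

lemma qbin_natCast (x : LaurentPolynomial ℤ) (n k : ℕ) :
    qbin x (n : ℤ) (k : ℤ) = gaussAux x n k := by
  simp [qbin]

/-- coefficient on the boundary. -/
lemma qbin_k_zero (x : LaurentPolynomial ℤ) (n : ℤ) (hn : 0 ≤ n) : qbin x n 0 = 1 := by
  rw [qbin, if_pos ⟨hn, le_refl 0⟩]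
  exact gaussAux_zero_right x n.toNat

lemma T_mul_T (a b c : ℤ) (h : a + b = c) : (T a : LaurentPolynomial ℤ) * T b = T c := by
  rw [← T_add, h]

/-- Pascal recurrence, first form, for integer second index. -/
lemma qbin_pascal (n : ℕ) (k : ℤ) :
    qbin (T 1) ((n : ℤ) + 1) k = qbin (T 1) n (k - 1) + T k * qbin (T 1) n k := by
  rcases lt_trichotomy k 0 with hk | hk | hk
  · rw [qbin_eq_zero_of_neg (T 1) ((n:ℤ)+1) k hk, qbin_eq_zero_of_neg (T 1) (n:ℤ) (k-1) (by omega),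
      qbin_eq_zero_of_neg (T 1) (n:ℤ) k hk]
    ring
  · subst hk
    rw [qbin_eq_zero_of_neg (T 1) (n:ℤ) (0-1) (by norm_num),
      qbin_k_zero (T 1) ((n:ℤ)+1) (by omega), qbin_k_zero (T 1) (n:ℤ) (by omega), T_zero]
    ring
  · obtain ⟨m, rfl⟩ : ∃ m : ℕ, k = (m : ℤ) + 1 := by
      refine ⟨(k - 1).toNat, by omega⟩
    rw [show ((m : ℤ) + 1 - 1) = ((m : ℕ) : ℤ) by ring,
      show ((n : ℤ) + 1) = ((n + 1 : ℕ) : ℤ) by push_cast; ring,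
      show ((m : ℤ) + 1) = ((m + 1 : ℕ) : ℤ) by push_cast; ring,
      qbin_natCast, qbin_natCast, qbin_natCast,
      gaussAux, T_pow, show (((m + 1 : ℕ) : ℤ) * 1) = ((m + 1 : ℕ) : ℤ) by ring]

/-- Pascal recurrence, second form, for integer second index. -/
lemma qbin_pascal' (n : ℕ) (k : ℤ) :
    qbin (T 1) ((n : ℤ) + 1) k
      = T ((n : ℤ) + 1 - k) * qbin (T 1) n (k - 1) + qbin (T 1) n k := by
  induction n generalizing k with
  | zero =>
    rcases lt_trichotomy k 0 with hk | hk | hk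
    · rw [qbin_eq_zero_of_neg (T 1) (((0:ℕ):ℤ)+1) k hk,
        qbin_eq_zero_of_neg (T 1) ((0:ℕ):ℤ) (k-1) (by omega),
        qbin_eq_zero_of_neg (T 1) ((0:ℕ):ℤ) k hk]
      ring
    · subst hk
      rw [qbin_eq_zero_of_neg (T 1) ((0:ℕ):ℤ) (0-1) (by norm_num),
        qbin_k_zero (T 1) (((0:ℕ):ℤ)+1) (by omega), qbin_k_zero (T 1) ((0:ℕ):ℤ) (by omega)]
      ring
    · by_cases hk1 : k = 1
      · subst hk1
        rw [show (1:ℤ) - 1 = 0 by ring, qbin_k_zero (T 1) ((0:ℕ):ℤ) (by norm_num),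
          qbin_eq_zero_of_lt (T 1) ((0:ℕ):ℤ) 1 (by norm_num),
          show qbin (T 1) (((0:ℕ):ℤ) + 1) 1 = gaussAux (T 1) 1 1 from by norm_num [qbin],
          show gaussAux (T 1) 1 1
            = gaussAux (T 1) 0 0 + (T 1) ^ (0+1) * gaussAux (T 1) 0 (0+1) from rfl,
          gaussAux_zero_right, gaussAux_eq_zero (T 1) (show 0 < 0+1 by omega),
          show (((0:ℕ):ℤ) + 1 - 1) = 0 by norm_num, T_zero]
        simp
      · rw [qbin_eq_zero_of_lt (T 1) (((0:ℕ):ℤ)+1) k (by omega),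
          qbin_eq_zero_of_lt (T 1) ((0:ℕ):ℤ) (k-1) (by omega),
          qbin_eq_zero_of_lt (T 1) ((0:ℕ):ℤ) k (by omega)]
        ring
  | succ n ih =>
    have e1 : ((n + 1 : ℕ) : ℤ) = (n : ℤ) + 1 := by push_cast; ring
    have hp := qbin_pascal (n + 1) k
    have hp1 := qbin_pascal n (k - 1)
    have hp2 := qbin_pascal n k
    rw [e1] at hp
    rw [e1]
    conv_lhs => rw [hp, ih (k - 1), ih k]
    conv_rhs => rw [hp1, hp2]
    rw [show ((n:ℤ) + 1 - (k - 1)) = (n:ℤ) + 1 + 1 - k by ring]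
    have h1 : (T ((n:ℤ) + 1 + 1 - k) : LaurentPolynomial ℤ) * T (k - 1) = T ((n:ℤ) + 1) :=
      T_mul_T _ _ _ (by ring)
    have h2 : (T k : LaurentPolynomial ℤ) * T ((n:ℤ) + 1 - k) = T ((n:ℤ) + 1) :=
      T_mul_T _ _ _ (by ring)
    linear_combination (qbin (T 1) (n:ℤ) (k - 1)) * h2 - (qbin (T 1) (n:ℤ) (k - 1)) * h1

/-- Symmetry of the Gaussian binomial. -/
lemma qbin_symm (n : ℕ) (k : ℤ) :
    qbin (T 1) (n : ℤ) k = qbin (T 1) (n : ℤ) ((n : ℤ) - k) := by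
  induction n generalizing k with
  | zero =>
    rcases lt_trichotomy k 0 with hk | hk | hk
    · rw [qbin_eq_zero_of_neg (T 1) ((0:ℕ):ℤ) k hk,
        qbin_eq_zero_of_lt (T 1) ((0:ℕ):ℤ) (((0:ℕ):ℤ) - k) (by omega)]
    · subst hk
      norm_num
    · rw [qbin_eq_zero_of_lt (T 1) ((0:ℕ):ℤ) k (by omega),
        qbin_eq_zero_of_neg (T 1) ((0:ℕ):ℤ) (((0:ℕ):ℤ) - k) (by omega)]
  | succ n ih =>
    have e1 : ((n + 1 : ℕ) : ℤ) = (n : ℤ) + 1 := by push_cast; ring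
    rw [e1, qbin_pascal n k, qbin_pascal' n ((n : ℤ) + 1 - k),
      show ((n:ℤ) + 1 - ((n:ℤ) + 1 - k)) = k by ring,
      show ((n:ℤ) + 1 - k - 1) = (n:ℤ) - k by ring, ← ih k,
      show ((n:ℤ) + 1 - k) = (n:ℤ) - (k - 1) by ring, ← ih (k - 1)]
    ring

lemma qbin_ne_zero_bounds {n c : ℤ} {j : ℤ} (h : qbin (T 1) n (c - 2 * j) ≠ 0) :
    0 ≤ c - 2 * j ∧ c - 2 * j ≤ n := by
  constructor
  · by_contra hc
    exact h (qbin_eq_zero_of_neg _ _ _ (by omega))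
  · by_contra hc
    exact h (qbin_eq_zero_of_lt _ _ _ (by omega))

lemma qbin_support (n c : ℤ) : {j : ℤ | qbin (T 1) n (c - 2 * j) ≠ 0}.Finite := by
  apply Set.Finite.subset (Set.finite_Icc (-(|c| + |n|)) |c|)
  intro j hj
  rw [Set.mem_setOf_eq] at hj
  obtain ⟨h1, h2⟩ := qbin_ne_zero_bounds hj
  have hc1 := le_abs_self c
  have hc2 := neg_abs_le c
  have hn1 := le_abs_self n
  rw [Set.mem_Icc]
  constructor <;> nlinarith

/-- The main family of alternating sums. -/
def SS (n c e : ℤ) : LaurentPolynomial ℤ :=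
  ∑ᶠ j : ℤ, m1 j * T (2 * j ^ 2 + e * j) * qbin (T 1) n (c - 2 * j)

lemma supp_fin {n c : ℤ} {h : ℤ → LaurentPolynomial ℤ}
    (hpt : ∀ j, qbin (T 1) n (c - 2 * j) = 0 → h j = 0) :
    (Function.support h).Finite := by
  apply Set.Finite.subset (qbin_support n c)
  intro j hj
  rw [Function.mem_support] at hj
  rw [Set.mem_setOf_eq]
  intro h0
  exact hj (hpt j h0)

lemma m1_zero : m1 0 = 1 := by simp [m1]

lemma m1_neg (j : ℤ) : m1 (-j) = m1 j := by
  unfold m1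
  rw [zpow_neg, Int.units_inv_eq_self]

lemma m1_sub_one (j : ℤ) : m1 (j - 1) = -m1 j := by
  unfold m1
  rw [zpow_sub_one]
  push_cast [Int.units_inv_eq_self]
  ring

/-- reindexed symmetric form: the sum with exponent `2j^2 - j` and column `M+1-2j`
over `2M+1` equals `SS (2M+1) M 1`. -/
lemma SS_flip (M : ℕ) :
    (∑ᶠ j : ℤ, m1 j * T (2 * j ^ 2 + (-1) * j)
        * qbin (T 1) (2 * (M : ℤ) + 1) ((M : ℤ) + 1 - 2 * j))
      = SS (2 * (M : ℤ) + 1) (M : ℤ) 1 := by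
  rw [SS]
  rw [← finsum_comp_equiv (Equiv.neg ℤ)
    (f := fun j : ℤ => m1 j * T (2 * j ^ 2 + 1 * j) * qbin (T 1) (2*(M:ℤ)+1) ((M:ℤ) - 2 * j))]
  apply finsum_congr
  intro j
  simp only [Equiv.neg_apply]
  rw [m1_neg, show (2 * (-j) ^ 2 + 1 * (-j)) = 2 * j ^ 2 + (-1) * j by ring,
    show ((M:ℤ) - 2 * (-j)) = (M:ℤ) + 2 * j by ring]
  have hs : qbin (T 1) ((2 * M + 1 : ℕ) : ℤ) ((M:ℤ) + 1 - 2 * j)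
      = qbin (T 1) ((2 * M + 1 : ℕ) : ℤ) (((2 * M + 1 : ℕ) : ℤ) - ((M:ℤ) + 1 - 2 * j)) :=
    qbin_symm (2 * M + 1) _
  rw [show ((2 * M + 1 : ℕ) : ℤ) = 2 * (M : ℤ) + 1 by push_cast; ring] at hs
  rw [show (2 * (M:ℤ) + 1 - ((M:ℤ) + 1 - 2 * j)) = (M:ℤ) + 2 * j by ring] at hs
  rw [hs]

lemma X_eq (M : ℕ) :
    SS (2 * (M : ℤ) + 2) ((M : ℤ) + 1) (-1)
      = (1 + T ((M : ℤ) + 1)) * SS (2 * (M : ℤ) + 1) (M : ℤ) 1 := by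
  have key : ∀ j : ℤ,
      m1 j * T (2 * j ^ 2 + (-1) * j) * qbin (T 1) (2 * (M:ℤ) + 2) ((M:ℤ) + 1 - 2 * j)
      = T ((M:ℤ) + 1) * (m1 j * T (2 * j ^ 2 + 1 * j) * qbin (T 1) (2*(M:ℤ)+1) ((M:ℤ) - 2 * j))
        + m1 j * T (2 * j ^ 2 + (-1) * j) * qbin (T 1) (2*(M:ℤ)+1) ((M:ℤ) + 1 - 2 * j) := by
    intro j
    have hp := qbin_pascal' (2 * M + 1) ((M:ℤ) + 1 - 2 * j)
    rw [show ((2 * M + 1 : ℕ) : ℤ) = 2 * (M:ℤ) + 1 by push_cast; ring] at hp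
    rw [show (2 * (M:ℤ) + 1 + 1 - ((M:ℤ) + 1 - 2 * j)) = ((M:ℤ) + 1) + 2 * j by ring,
      show ((M:ℤ) + 1 - 2 * j - 1) = (M:ℤ) - 2 * j by ring,
      show (2 * (M:ℤ) + 1 + 1) = 2 * (M:ℤ) + 2 by ring] at hp
    rw [hp, T_add ((M:ℤ) + 1) (2 * j)]
    rw [show (T (2 * j ^ 2 + 1 * j) : LaurentPolynomial ℤ)
        = T (2 * j ^ 2 + (-1) * j) * T (2 * j) from by
      rw [← T_add]; ring_nf]
    ring
  rw [SS, finsum_congr key, finsum_add_distrib, ← mul_finsum, ← SS, SS_flip M]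
  · ring
  · exact supp_fin fun j h => by rw [h]; ring
  · exact supp_fin fun j h => by rw [h]; ring

lemma E_eq (M : ℕ) :
    SS (2 * (M : ℤ) + 2) (M : ℤ) 1
      = (1 - T ((M : ℤ) + 1)) * SS (2 * (M : ℤ) + 1) (M : ℤ) 1 := by
  have key : ∀ j : ℤ,
      m1 j * T (2 * j ^ 2 + 1 * j) * qbin (T 1) (2 * (M:ℤ) + 2) ((M:ℤ) - 2 * j)
      = T ((M:ℤ) + 1) * (m1 j * T (2 * j ^ 2 + 3 * j + 1)
            * qbin (T 1) (2*(M:ℤ)+1) ((M:ℤ) - 1 - 2 * j))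
        + m1 j * T (2 * j ^ 2 + 1 * j) * qbin (T 1) (2*(M:ℤ)+1) ((M:ℤ) - 2 * j) := by
    intro j
    have hp := qbin_pascal' (2 * M + 1) ((M:ℤ) - 2 * j)
    rw [show ((2 * M + 1 : ℕ) : ℤ) = 2 * (M:ℤ) + 1 by push_cast; ring] at hp
    rw [show (2 * (M:ℤ) + 1 + 1 - ((M:ℤ) - 2 * j)) = ((M:ℤ) + 1) + (2 * j + 1) by ring,
      show ((M:ℤ) - 2 * j - 1) = (M:ℤ) - 1 - 2 * j by ring,
      show (2 * (M:ℤ) + 1 + 1) = 2 * (M:ℤ) + 2 by ring] at hp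
    rw [hp, T_add ((M:ℤ) + 1) (2 * j + 1)]
    rw [show (T (2 * j ^ 2 + 3 * j + 1) : LaurentPolynomial ℤ)
        = T (2 * j ^ 2 + 1 * j) * T (2 * j + 1) from by
      rw [← T_add]; ring_nf]
    ring
  have hshift : (∑ᶠ j : ℤ, m1 j * T (2 * j ^ 2 + 3 * j + 1)
        * qbin (T 1) (2*(M:ℤ)+1) ((M:ℤ) - 1 - 2 * j))
      = - SS (2 * (M:ℤ) + 1) (M:ℤ) 1 := by
    rw [← SS_flip M]
    rw [← finsum_comp_equiv (Equiv.subRight (1 : ℤ))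
      (f := fun j : ℤ => m1 j * T (2 * j ^ 2 + 3 * j + 1)
        * qbin (T 1) (2*(M:ℤ)+1) ((M:ℤ) - 1 - 2 * j)), ← finsum_neg_distrib]
    apply finsum_congr
    intro j
    simp only [Equiv.subRight_apply]
    rw [m1_sub_one,
      show (2 * (j - 1) ^ 2 + 3 * (j - 1) + 1) = 2 * j ^ 2 + (-1) * j by ring,
      show ((M:ℤ) - 1 - 2 * (j - 1)) = (M:ℤ) + 1 - 2 * j by ring]
    ring
  rw [SS, finsum_congr key, finsum_add_distrib, ← mul_finsum, hshift, ← SS]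
  · ring
  · exact supp_fin fun j h => by rw [h]; ring
  · exact supp_fin fun j h => by rw [h]; ring

lemma D_rec (M : ℕ) :
    SS (2 * (M : ℤ) + 3) ((M : ℤ) + 1) 1
      = SS (2 * (M : ℤ) + 2) (M : ℤ) 1
        + T ((M : ℤ) + 1) * SS (2 * (M : ℤ) + 2) ((M : ℤ) + 1) (-1) := by
  have key : ∀ j : ℤ,
      m1 j * T (2 * j ^ 2 + 1 * j) * qbin (T 1) (2 * (M:ℤ) + 3) ((M:ℤ) + 1 - 2 * j)
      = m1 j * T (2 * j ^ 2 + 1 * j) * qbin (T 1) (2 * (M:ℤ) + 2) ((M:ℤ) - 2 * j)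
        + T ((M:ℤ) + 1) * (m1 j * T (2 * j ^ 2 + (-1) * j)
            * qbin (T 1) (2 * (M:ℤ) + 2) ((M:ℤ) + 1 - 2 * j)) := by
    intro j
    have hp := qbin_pascal (2 * M + 2) ((M:ℤ) + 1 - 2 * j)
    rw [show ((2 * M + 2 : ℕ) : ℤ) = 2 * (M:ℤ) + 2 by push_cast; ring] at hp
    rw [show (2 * (M:ℤ) + 2 + 1) = 2 * (M:ℤ) + 3 by ring,
      show ((M:ℤ) + 1 - 2 * j - 1) = (M:ℤ) - 2 * j by ring] at hp
    rw [hp,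
      show (T ((M:ℤ) + 1 - 2 * j) : LaurentPolynomial ℤ)
        = T ((M:ℤ) + 1) * T (-(2 * j)) from by rw [← T_add]; ring_nf,
      show (T (2 * j ^ 2 + (-1) * j) : LaurentPolynomial ℤ)
        = T (2 * j ^ 2 + 1 * j) * T (-(2 * j)) from by rw [← T_add]; ring_nf]
    ring
  rw [SS, finsum_congr key, finsum_add_distrib, ← mul_finsum, ← SS, ← SS]
  · exact supp_fin fun j h => by rw [h]; ring
  · exact supp_fin fun j h => by rw [h]; ring

lemma D_zero : SS 1 0 1 = 1 := by
  rw [SS, finsum_eq_single _ (0 : ℤ)]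
  · rw [m1_zero, show (2 * (0:ℤ) ^ 2 + 1 * 0) = 0 by ring, T_zero,
      show ((0:ℤ) - 2 * 0) = ((0 : ℕ) : ℤ) by norm_num,
      show (1 : ℤ) = ((1 : ℕ) : ℤ) by norm_num, qbin_natCast, gaussAux_zero_right]
    ring
  · intro j hj
    rcases lt_or_gt_of_ne hj with h | h
    · rw [qbin_eq_zero_of_lt (T 1) 1 (0 - 2 * j) (by omega)]
      ring
    · rw [qbin_eq_zero_of_neg (T 1) 1 (0 - 2 * j) (by omega)]
      ring

lemma D_prod (M : ℕ) :
    SS (2 * (M : ℤ) + 1) (M : ℤ) 1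
      = ∏ k ∈ Finset.Icc 1 M, (1 + T (2 * (k : ℤ))) := by
  induction M with
  | zero => simpa using D_zero
  | succ M ih =>
    have h1 : ((M + 1 : ℕ) : ℤ) = (M : ℤ) + 1 := by push_cast; ring
    have h2 : (2 * ((M : ℤ) + 1) + 1) = 2 * (M:ℤ) + 3 := by ring
    rw [h1, h2, D_rec M, E_eq M, X_eq M, ih,
      Finset.prod_Icc_succ_top (by omega : 1 ≤ M + 1)]
    rw [show ((1 : LaurentPolynomial ℤ) - T ((M:ℤ)+1))
            * (∏ k ∈ Finset.Icc 1 M, ((1 : LaurentPolynomial ℤ) + T (2 * (k:ℤ))))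
          + T ((M:ℤ)+1) * (((1 : LaurentPolynomial ℤ) + T ((M:ℤ)+1))
            * ∏ k ∈ Finset.Icc 1 M, ((1 : LaurentPolynomial ℤ) + T (2 * (k:ℤ))))
        = ((1 : LaurentPolynomial ℤ) + T ((M:ℤ)+1) * T ((M:ℤ)+1))
            * ∏ k ∈ Finset.Icc 1 M, ((1 : LaurentPolynomial ℤ) + T (2 * (k:ℤ)))
        from by ring, ← T_add,
      show ((M:ℤ) + 1 + ((M:ℤ) + 1)) = 2 * ((M:ℤ) + 1) by ring, h1]
    ring

lemma coeff_nonneg_mul {f g : LaurentPolynomial ℤ}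
    (hf : ∀ n : ℤ, 0 ≤ (AddMonoidAlgebra.coeff f : ℤ →₀ ℤ) n) (hg : ∀ n : ℤ, 0 ≤ (AddMonoidAlgebra.coeff g : ℤ →₀ ℤ) n) : ∀ n : ℤ, 0 ≤ (AddMonoidAlgebra.coeff (f * g) : ℤ →₀ ℤ) n := by
  intro n
  classical
  rw [AddMonoidAlgebra.coeff_mul, Finsupp.sum]
  apply Finset.sum_nonneg
  intro a _
  rw [Finsupp.sum]
  apply Finset.sum_nonneg
  intro b _
  split_ifs
  · exact mul_nonneg (hf a) (hg b)
  · exact le_refl _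

lemma coeff_nonneg_one_add_T (a : ℤ) :
    ∀ n : ℤ, 0 ≤ (AddMonoidAlgebra.coeff (1 + T a : LaurentPolynomial ℤ) : ℤ →₀ ℤ) n := by
  intro n
  rw [AddMonoidAlgebra.coeff_add, AddMonoidAlgebra.one_def, T, Finsupp.add_apply, AddMonoidAlgebra.coeff_single_apply, AddMonoidAlgebra.coeff_single_apply]
  split_ifs <;> norm_num

theorem stmt6 (L : ℕ) (hL : 0 < L) :
    (∑ᶠ j : ℤ, m1 j * T (2 * j ^ 2 - j) * qbin (T 1) (2 * L) (L - 2 * j)) =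
      (1 + T L) * ∏ k ∈ Finset.Icc 1 (L - 1), (1 + T (2 * (k : ℤ))) ∧
    ∀ n : ℤ, 0 ≤
      (AddMonoidAlgebra.coeff (∑ᶠ j : ℤ, m1 j * T (2 * j ^ 2 - j) * qbin (T 1) (2 * L) (L - 2 * j)) : ℤ →₀ ℤ) n := by
  obtain ⟨M, rfl⟩ : ∃ M : ℕ, L = M + 1 := ⟨L - 1, (Nat.succ_pred_eq_of_pos hL).symm⟩
  have hmain : (∑ᶠ j : ℤ, m1 j * T (2 * j ^ 2 - j)
        * qbin (T 1) (2 * ((M + 1 : ℕ) : ℤ)) (((M + 1 : ℕ) : ℤ) - 2 * j))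
      = (1 + T ((M + 1 : ℕ) : ℤ))
          * ∏ k ∈ Finset.Icc 1 (M + 1 - 1), (1 + T (2 * (k : ℤ))) := by
    have h1 : ((M + 1 : ℕ) : ℤ) = (M : ℤ) + 1 := by push_cast; ring
    have hS : (∑ᶠ j : ℤ, m1 j * T (2 * j ^ 2 - j)
          * qbin (T 1) (2 * ((M + 1 : ℕ) : ℤ)) (((M + 1 : ℕ) : ℤ) - 2 * j))
        = SS (2 * (M : ℤ) + 2) ((M : ℤ) + 1) (-1) := by
      rw [SS]
      apply finsum_congr
      intro j
      rw [h1, show (2 * ((M:ℤ) + 1)) = 2 * (M:ℤ) + 2 by ring,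
        show (2 * j ^ 2 - j) = 2 * j ^ 2 + (-1) * j by ring]
    rw [hS, X_eq M, D_prod M, h1]
    norm_num
  refine ⟨hmain, ?_⟩
  rw [hmain]
  apply coeff_nonneg_mul (coeff_nonneg_one_add_T _)
  refine Finset.prod_induction _ (fun f : LaurentPolynomial ℤ => ∀ n : ℤ, 0 ≤ (AddMonoidAlgebra.coeff f : ℤ →₀ ℤ) n) ?_ ?_ ?_
  · exact fun f g hf hg => coeff_nonneg_mul hf hg
  · intro n
    rw [AddMonoidAlgebra.one_def, AddMonoidAlgebra.coeff_single_apply]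
    split_ifs <;> norm_num
  · exact fun k _ => coeff_nonneg_one_add_T _
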